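/- Intertwining property: Let ε > 0, let P0(t) (t ∈ [0,1]) be a strongly C¹ family of bounded projections (P0(t)² = P0(t)) on H, and set K0(t) := i[P0'(t), P0(t)]. Let G(t) be a family of self-adjoint operators with common dense domain D' such that P0(t) maps D' into D' and G(t)(P0(t)φ) = P0(t)(G(t)φ) for every φ ∈ D' and every t. Let V(t) be unitary operators with V(0) = I such that V(t) and V(t)⁻¹ map D' into D' and, for every φ ∈ D', the map t ↦ V(t)φ is differentiable with iε(d/dt)(V(t)φ) = G(t)(V(t)φ) + εK0(t)V(t)φ. Then V(t)P0(0) = P0(t)V(t) for all t ∈ [0,1]. -/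

import Mathlib

open Set Filter Topology

/-- Strong product rule for a strongly differentiable family of operators applied
to a differentiable vector-valued function. -/
lemma strong_prod_rule {H : Type*} [NormedAddCommGroup H] [NormedSpace ℂ H]
    {A : ℝ → H →L[ℂ] H} {A't : H →L[ℂ] H} {g : ℝ → H} {g' : H} {t : ℝ} {s : Set ℝ}
    (M : ℝ) (hM : ∀ u ∈ s, ‖A u‖ ≤ M)
    (hA : HasDerivWithinAt (fun u => A u (g t)) (A't (g t)) s t)
    (hAc : ContinuousWithinAt (fun u => A u g') s t)
    (hg : HasDerivWithinAt g g' s t) :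
    HasDerivWithinAt (fun u => A u (g u)) (A't (g t) + A t g') s t := by
  rw [hasDerivWithinAt_iff_tendsto_slope] at hA hg ⊢
  have hsub : (𝓝[s \ {t}] t) ≤ 𝓝[s] t := nhdsWithin_mono _ diff_subset
  have key : ∀ u ∈ s \ {t}, slope (fun u => A u (g u)) t u
      = slope (fun u => A u (g t)) t u + A u (slope g t u) := by
    intro u hu
    simp only [slope_def_module]
    rw [ContinuousLinearMap.map_smul_of_tower, map_sub, ← smul_add]
    congr 1
    abel
  have h1 : Tendsto (fun u => A u (slope g t u - g')) (𝓝[s \ {t}] t) (𝓝 0) := by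
    apply squeeze_zero_norm' (a := fun u => M * ‖slope g t u - g'‖)
    · filter_upwards [eventually_mem_nhdsWithin] with u hu
      calc ‖A u (slope g t u - g')‖ ≤ ‖A u‖ * ‖slope g t u - g'‖ :=
            (A u).le_opNorm _
        _ ≤ M * ‖slope g t u - g'‖ :=
            mul_le_mul_of_nonneg_right (hM u hu.1) (norm_nonneg _)
    · have h0 : Tendsto (fun u => slope g t u - g') (𝓝[s \ {t}] t) (𝓝 0) := by
        simpa using hg.sub_const g'
      simpa using h0.norm.const_mul M
  have h2 : Tendsto (fun u => A u g') (𝓝[s \ {t}] t) (𝓝 (A t g')) :=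
    (hAc.tendsto).mono_left hsub
  have h3 : Tendsto (fun u => A u (slope g t u)) (𝓝[s \ {t}] t) (𝓝 (A t g')) := by
    have := h1.add h2
    simp only [zero_add] at this
    refine this.congr (fun u => ?_)
    simp [map_sub]
  have := hA.add h3
  refine (Tendsto.congr' ?_ this)
  filter_upwards [eventually_mem_nhdsWithin] with u hu
  exact (key u hu).symm


/-!
STATEMENT 5 (Intertwining property): Let `ε > 0`, let `P0(t)` (`t ∈ [0,1]`) be
a strongly C¹ family of bounded projections (`P0(t)² = P0(t)`) on `H`, and set
`K0(t) := i[P0'(t), P0(t)]`.  Let `G(t)` be a family of self-adjoint operators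
with common dense domain `D'` such that `P0(t)` maps `D'` into `D'` and
`G(t)(P0(t)φ) = P0(t)(G(t)φ)` for every `φ ∈ D'` and every `t`.  Let `V(t)` be
unitary operators with `V(0) = I` such that `V(t)` and `V(t)⁻¹` map `D'` into
`D'` and, for every `φ ∈ D'`, the map `t ↦ V(t)φ` is differentiable with
`iε(d/dt)(V(t)φ) = G(t)(V(t)φ) + εK0(t)V(t)φ`.
Then `V(t)P0(0) = P0(t)V(t)` for all `t ∈ [0,1]`.
-/

theorem intertwining_property
    {H : Type*} [NormedAddCommGroup H] [InnerProductSpace ℂ H] [CompleteSpace H]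
    [TopologicalSpace.SeparableSpace H]
    (ε : ℝ) (hε : 0 < ε)
    (P0 P0' : ℝ → H →L[ℂ] H)
    (hP0idem : ∀ t ∈ Set.Icc (0:ℝ) 1, P0 t ∘L P0 t = P0 t)
    (hP0deriv : ∀ x : H, ∀ t ∈ Set.Icc (0:ℝ) 1,
      HasDerivWithinAt (fun s => P0 s x) (P0' t x) (Set.Icc (0:ℝ) 1) t)
    (hP0'cont : ∀ x : H, ContinuousOn (fun t => P0' t x) (Set.Icc (0:ℝ) 1))
    (K0 : ℝ → H →L[ℂ] H)
    (hK0 : ∀ t, K0 t = Complex.I • (P0' t ∘L P0 t - P0 t ∘L P0' t))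
    (D' : Submodule ℂ H) (hD' : Dense (D' : Set H))
    (G : ℝ → D' →ₗ[ℂ] H)
    (hGsa : ∀ t ∈ Set.Icc (0:ℝ) 1, IsSelfAdjoint (LinearPMap.mk D' (G t)))
    (hP0D' : ∀ t, t ∈ Set.Icc (0:ℝ) 1 → ∀ φ : D', P0 t (φ : H) ∈ D')
    (hGcomm : ∀ t, ∀ ht : t ∈ Set.Icc (0:ℝ) 1, ∀ φ : D',
      G t ⟨P0 t (φ : H), hP0D' t ht φ⟩ = P0 t (G t φ))
    (V Vinv : ℝ → H →L[ℂ] H)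
    -- `V(t)` unitary with inverse `Vinv(t)`
    (hVunit : ∀ t ∈ Set.Icc (0:ℝ) 1,
      V t ∘L Vinv t = 1 ∧ Vinv t ∘L V t = 1 ∧ ∀ x : H, ‖V t x‖ = ‖x‖)
    (hV0 : V 0 = 1)
    (hVD' : ∀ t, t ∈ Set.Icc (0:ℝ) 1 → ∀ φ : D', V t (φ : H) ∈ D')
    (hVinvD' : ∀ t, t ∈ Set.Icc (0:ℝ) 1 → ∀ φ : D', Vinv t (φ : H) ∈ D')
    -- the Schrödinger equation `iε (d/dt)(V(t)φ) = G(t)(V(t)φ) + ε K0(t) V(t) φ`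
    (hVeq : ∀ φ : D', ∀ t, ∀ ht : t ∈ Set.Icc (0:ℝ) 1,
      ∃ w : H, HasDerivWithinAt (fun s => V s (φ : H)) w (Set.Icc (0:ℝ) 1) t ∧
        (Complex.I * (ε : ℂ)) • w
          = G t ⟨V t (φ : H), hVD' t ht φ⟩ + (ε : ℂ) • K0 t (V t (φ : H))) :
    ∀ t ∈ Set.Icc (0:ℝ) 1, V t ∘L P0 0 = P0 t ∘L V t := by
  classical
  have h0 : (0:ℝ) ∈ Set.Icc (0:ℝ) 1 := ⟨le_refl 0, zero_le_one⟩
  -- uniform bound on `‖P0 t‖`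
  obtain ⟨MP, hMP⟩ : ∃ M, ∀ t ∈ Set.Icc (0:ℝ) 1, ‖P0 t‖ ≤ M := by
    obtain ⟨C, hC⟩ := banach_steinhaus
      (g := fun i : Set.Icc (0:ℝ) 1 => P0 i) (fun x => by
        obtain ⟨C, hC⟩ := isCompact_Icc.exists_bound_of_continuousOn
          (f := fun t => P0 t x) (fun t ht => (hP0deriv x t ht).continuousWithinAt)
        exact ⟨C, fun i => hC i i.2⟩)
    exact ⟨C, fun t ht => hC ⟨t, ht⟩⟩
  -- uniform bound on `‖P0' t‖`
  obtain ⟨MP', hMP'⟩ : ∃ M, ∀ t ∈ Set.Icc (0:ℝ) 1, ‖P0' t‖ ≤ M := by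
    obtain ⟨C, hC⟩ := banach_steinhaus
      (g := fun i : Set.Icc (0:ℝ) 1 => P0' i) (fun x => by
        obtain ⟨C, hC⟩ := isCompact_Icc.exists_bound_of_continuousOn
          (f := fun t => P0' t x) (hP0'cont x)
        exact ⟨C, fun i => hC i i.2⟩)
    exact ⟨C, fun t ht => hC ⟨t, ht⟩⟩
  have hMPnn : 0 ≤ MP := le_trans (norm_nonneg _) (hMP 0 h0)
  have hMP'nn : 0 ≤ MP' := le_trans (norm_nonneg _) (hMP' 0 h0)
  -- uniform bound on `‖K0 t‖`
  set CK : ℝ := MP' * MP + MP * MP' with hCK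
  have hCKnn : 0 ≤ CK := by positivity
  have hKbound : ∀ t ∈ Set.Icc (0:ℝ) 1, ‖K0 t‖ ≤ CK := by
    intro t ht
    rw [hK0 t]
    rw [norm_smul]
    simp only [Complex.norm_I, one_mul]
    calc ‖P0' t ∘L P0 t - P0 t ∘L P0' t‖
        ≤ ‖P0' t ∘L P0 t‖ + ‖P0 t ∘L P0' t‖ := norm_sub_le _ _
      _ ≤ MP' * MP + MP * MP' := by
          gcongr
          · exact le_trans (ContinuousLinearMap.opNorm_comp_le _ _)
              (mul_le_mul (hMP' t ht) (hMP t ht) (norm_nonneg _) hMP'nn)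
          · exact le_trans (ContinuousLinearMap.opNorm_comp_le _ _)
              (mul_le_mul (hMP t ht) (hMP' t ht) (norm_nonneg _) hMPnn)
  -- Leibniz identity for the projection
  have leib : ∀ t ∈ Set.Icc (0:ℝ) 1, ∀ v : H,
      P0' t v = P0' t (P0 t v) + P0 t (P0' t v) := by
    intro t ht v
    have h1 : HasDerivWithinAt (fun u => P0 u (P0 u v))
        (P0' t (P0 t v) + P0 t (P0' t v)) (Set.Icc (0:ℝ) 1) t :=
      strong_prod_rule MP hMP (hP0deriv (P0 t v) t ht)
        ((hP0deriv (P0' t v) t ht).continuousWithinAt) (hP0deriv v t ht)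
    have heq : ∀ u ∈ Set.Icc (0:ℝ) 1, P0 u v = P0 u (P0 u v) := by
      intro u hu
      exact (congrArg (fun L : H →L[ℂ] H => L v) (hP0idem u hu)).symm
    have h2 : HasDerivWithinAt (fun u => P0 u v)
        (P0' t (P0 t v) + P0 t (P0' t v)) (Set.Icc (0:ℝ) 1) t :=
      h1.congr heq (heq t ht)
    have hu := (uniqueDiffOn_Icc_zero_one t ht)
    have e1 := h2.derivWithin hu
    have e2 := (hP0deriv v t ht).derivWithin hu
    rw [← e1, ← e2]
  -- `P0 P0' P0 = 0`
  have ppp : ∀ t ∈ Set.Icc (0:ℝ) 1, ∀ v : H, P0 t (P0' t (P0 t v)) = 0 := by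
    intro t ht v
    have hidem : P0 t (P0 t v) = P0 t v :=
      congrArg (fun L : H →L[ℂ] H => L v) (hP0idem t ht)
    have h := leib t ht (P0 t v)
    rw [hidem] at h
    exact (left_eq_add.mp h).symm ▸ rfl
  -- commutator identity : `K0 P0 - P0 K0 = i P0'` (strongly)
  have commK : ∀ t ∈ Set.Icc (0:ℝ) 1, ∀ v : H,
      K0 t (P0 t v) - P0 t (K0 t v) = Complex.I • P0' t v := by
    intro t ht v
    have hidem : ∀ w, P0 t (P0 t w) = P0 t w := fun w =>
      congrArg (fun L : H →L[ℂ] H => L w) (hP0idem t ht)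
    rw [hK0 t]
    simp only [ContinuousLinearMap.smul_apply, ContinuousLinearMap.sub_apply,
      ContinuousLinearMap.comp_apply, map_smul, map_sub]
    rw [hidem v, ppp t ht v, hidem (P0' t v)]
    conv_rhs => rw [leib t ht v]
    module
  -- symmetry of G
  have hGsym : ∀ t ∈ Set.Icc (0:ℝ) 1, ∀ ρ σ : D',
      (inner ℂ (G t ρ) (σ : H) : ℂ) = inner ℂ (ρ : H) (G t σ) := by
    intro t ht ρ σ
    have hA := hGsa t ht
    rw [LinearPMap.isSelfAdjoint_def] at hA
    have hd : Dense ((LinearPMap.mk D' (G t)).domain : Set H) := hD'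
    have hf := LinearPMap.adjoint_isFormalAdjoint hd
    rw [hA] at hf
    exact hf ρ σ
  have hIe : (Complex.I * (ε:ℂ)) ≠ 0 := by
    simp [Complex.ext_iff, ne_of_gt hε]
  -- the key pointwise statement on D'
  have key : ∀ φ : D', ∀ t ∈ Set.Icc (0:ℝ) 1,
      V t (P0 0 (φ:H)) = P0 t (V t (φ:H)) := by
    intro φ
    set ψ : D' := ⟨P0 0 (φ:H), hP0D' 0 h0 φ⟩ with hψ
    choose wx hwx hwx2 using hVeq φ
    choose wy hwy hwy2 using hVeq ψ
    set x : ℝ → H := fun s => V s (φ:H) with hx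
    set y : ℝ → H := fun s => V s (ψ:H) with hy
    set r : ℝ → H := fun s => y s - P0 s (x s) with hr
    set rd : ℝ → H := fun t =>
      if ht : t ∈ Set.Icc (0:ℝ) 1 then wy t ht - (P0' t (x t) + P0 t (wx t ht)) else 0
      with hrd
    have hrdval : ∀ t (ht : t ∈ Set.Icc (0:ℝ) 1),
        rd t = wy t ht - (P0' t (x t) + P0 t (wx t ht)) := by
      intro t ht; simp only [hrd, dif_pos ht]
    have hrderiv : ∀ t (ht : t ∈ Set.Icc (0:ℝ) 1),
        HasDerivWithinAt r (rd t) (Set.Icc (0:ℝ) 1) t := by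
      intro t ht
      have hz : HasDerivWithinAt (fun s => P0 s (x s)) (P0' t (x t) + P0 t (wx t ht))
          (Set.Icc (0:ℝ) 1) t :=
        strong_prod_rule MP hMP (hP0deriv (x t) t ht)
          ((hP0deriv (wx t ht) t ht).continuousWithinAt) (hwx t ht)
      rw [hrdval t ht]
      exact (hwy t ht).sub hz
    -- membership of the pieces in D'
    have hxD : ∀ t (ht : t ∈ Set.Icc (0:ℝ) 1), x t ∈ D' := fun t ht => hVD' t ht φ
    have hyD : ∀ t (ht : t ∈ Set.Icc (0:ℝ) 1), y t ∈ D' := fun t ht => hVD' t ht ψ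
    have hPxD : ∀ t (ht : t ∈ Set.Icc (0:ℝ) 1), P0 t (x t) ∈ D' := fun t ht =>
      hP0D' t ht ⟨x t, hxD t ht⟩
    have hrD : ∀ t (ht : t ∈ Set.Icc (0:ℝ) 1), r t ∈ D' := fun t ht =>
      D'.sub_mem (hyD t ht) (hPxD t ht)
    -- the ODE satisfied by `r`
    have hode : ∀ t (ht : t ∈ Set.Icc (0:ℝ) 1),
        (Complex.I * (ε:ℂ)) • rd t
          = G t (⟨r t, hrD t ht⟩) + (ε:ℂ) • K0 t (r t) := by
      intro t ht
      have e2 : (Complex.I * (ε:ℂ)) • (P0 t (wx t ht))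
          = G t ⟨P0 t (x t), hPxD t ht⟩ + (ε:ℂ) • (P0 t (K0 t (x t))) := by
        calc (Complex.I * (ε:ℂ)) • (P0 t (wx t ht))
            = P0 t ((Complex.I * (ε:ℂ)) • wx t ht) := (map_smul _ _ _).symm
          _ = P0 t (G t ⟨x t, hxD t ht⟩ + (ε:ℂ) • K0 t (x t)) := by rw [hwx2 t ht]
          _ = P0 t (G t ⟨x t, hxD t ht⟩) + (ε:ℂ) • P0 t (K0 t (x t)) := by
              rw [map_add, map_smul]
          _ = G t ⟨P0 t (x t), hPxD t ht⟩ + (ε:ℂ) • P0 t (K0 t (x t)) := by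
              rw [hGcomm t ht ⟨x t, hxD t ht⟩]
      have e3 : (Complex.I * (ε:ℂ)) • (P0' t (x t))
          = (ε:ℂ) • (K0 t (P0 t (x t))) - (ε:ℂ) • (P0 t (K0 t (x t))) := by
        rw [← smul_sub, commK t ht (x t), smul_smul, mul_comm]
      have e4 : G t (⟨r t, hrD t ht⟩)
          = G t ⟨y t, hyD t ht⟩ - G t ⟨P0 t (x t), hPxD t ht⟩ := by
        rw [← map_sub]
        congr 1
      have e5 : K0 t (r t) = K0 t (y t) - K0 t (P0 t (x t)) := by
        simp only [hr, map_sub]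
      have e1 := hwy2 t ht
      rw [hrdval t ht, smul_sub, smul_add, e1, e2, e3, e4, e5]
      module
    -- the squared-norm function and its derivative
    set f : ℝ → ℝ := fun s => ‖r s‖^2 with hfdef
    set fd : ℝ → ℝ := fun s =>
      if hs : s ∈ Set.Icc (0:ℝ) 1 then 2 * Complex.re (inner ℂ (r s) (rd s) : ℂ) else 0
      with hfddef
    have hfdval : ∀ s (hs : s ∈ Set.Icc (0:ℝ) 1),
        fd s = 2 * Complex.re (inner ℂ (r s) (rd s) : ℂ) := by
      intro s hs; simp only [hfddef, dif_pos hs]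
    have hnorm : ∀ u : ℝ, ‖r u‖^2 = Complex.re (inner ℂ (r u) (r u) : ℂ) := by
      intro u
      rw [← inner_self_eq_norm_sq (𝕜 := ℂ)]
      rfl
    have hfderiv : ∀ s (hs : s ∈ Set.Icc (0:ℝ) 1),
        HasDerivWithinAt f (fd s) (Set.Icc (0:ℝ) 1) s := by
      intro s hs
      have h1 := (hrderiv s hs).inner ℂ (hrderiv s hs)
      have h2 := (Complex.reCLM.hasFDerivAt).comp_hasDerivWithinAt s h1
      have h3 : Complex.reCLM ((inner ℂ (r s) (rd s) : ℂ) + inner ℂ (rd s) (r s)) = fd s := by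
        rw [hfdval s hs]
        rw [← inner_conj_symm (r s) (rd s)]
        simp only [map_add, Complex.reCLM_apply, Complex.conj_re]
        ring
      rw [h3] at h2
      refine h2.congr (fun u _ => ?_) ?_
      · simpa [Function.comp] using hnorm u
      · simpa [Function.comp] using hnorm s
    -- initial condition
    have hr0 : r 0 = 0 := by
      simp only [hr, hy, hx, hV0, hψ, ContinuousLinearMap.one_apply, sub_eq_zero]
    have hf0 : f 0 = 0 := by simp [hfdef, hr0]
    -- the bound on the derivative
    have hbound : ∀ s ∈ Set.Ico (0:ℝ) 1, ‖fd s‖ ≤ (2*CK) * ‖f s‖ + 0 := by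
      intro s hs
      have hs' : s ∈ Set.Icc (0:ℝ) 1 := Set.Ico_subset_Icc_self hs
      have hrdeq : rd s = (Complex.I * (ε:ℂ))⁻¹ •
          (G s ⟨r s, hrD s hs'⟩ + (ε:ℂ) • K0 s (r s)) := by
        rw [← hode s hs', inv_smul_smul₀ hIe]
      set a : ℂ := inner ℂ (r s) (G s ⟨r s, hrD s hs'⟩) with hadef
      set b : ℂ := inner ℂ (r s) (K0 s (r s)) with hbdef
      have hinner : (inner ℂ (r s) (rd s) : ℂ)
          = (Complex.I * (ε:ℂ))⁻¹ * (a + (ε:ℂ) * b) := by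
        rw [hrdeq, inner_smul_right, inner_add_right, inner_smul_right]
      have hconj : (starRingEnd ℂ) a = a := by
        rw [hadef, inner_conj_symm]
        exact hGsym s hs' ⟨r s, hrD s hs'⟩ ⟨r s, hrD s hs'⟩
      have haim : a.im = 0 := Complex.conj_eq_iff_im.mp hconj
      have hεne : (ε:ℝ) ≠ 0 := ne_of_gt hε
      have hre : Complex.re (inner ℂ (r s) (rd s) : ℂ) = b.im := by
        rw [hinner]
        rw [mul_inv, Complex.inv_I]
        simp only [Complex.mul_re, Complex.mul_im, Complex.neg_re, Complex.neg_im,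
          Complex.I_re, Complex.I_im, Complex.add_re, Complex.add_im,
          Complex.inv_re, Complex.inv_im, Complex.ofReal_re, Complex.ofReal_im,
          Complex.normSq_ofReal, haim]
        field_simp
        ring
      have hbnorm : ‖b‖ ≤ CK * ‖r s‖^2 := by
        calc ‖b‖ ≤ ‖r s‖ * ‖K0 s (r s)‖ := norm_inner_le_norm _ _
          _ ≤ ‖r s‖ * (CK * ‖r s‖) := by
              have := (K0 s).le_opNorm (r s)
              have h2 : ‖K0 s (r s)‖ ≤ CK * ‖r s‖ :=
                le_trans this (mul_le_mul_of_nonneg_right (hKbound s hs') (norm_nonneg _))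
              exact mul_le_mul_of_nonneg_left h2 (norm_nonneg _)
          _ = CK * ‖r s‖^2 := by ring
      have hfs : f s = ‖r s‖^2 := rfl
      rw [hfdval s hs', hre]
      rw [Real.norm_eq_abs, Real.norm_eq_abs, abs_mul, add_zero]
      have him : |b.im| ≤ ‖b‖ := by
        exact Complex.abs_im_le_norm b
      have hfabs : |f s| = ‖r s‖^2 := by
        rw [hfs, abs_of_nonneg (by positivity)]
      rw [hfabs]
      calc |2| * |b.im| ≤ 2 * ‖b‖ := by
            rw [abs_two]
            exact mul_le_mul_of_nonneg_left him (by norm_num)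
        _ ≤ 2 * (CK * ‖r s‖^2) := by
            exact mul_le_mul_of_nonneg_left hbnorm (by norm_num)
        _ = 2 * CK * ‖r s‖^2 := by ring
    -- Gronwall
    have hcont : ContinuousOn f (Set.Icc (0:ℝ) 1) := fun u hu =>
      (hfderiv u hu).continuousWithinAt
    have hf' : ∀ s ∈ Set.Ico (0:ℝ) 1, HasDerivWithinAt f (fd s) (Set.Ici s) s := by
      intro s hs
      refine (hfderiv s (Set.Ico_subset_Icc_self hs)).mono_of_mem_nhdsWithin ?_
      rw [mem_nhdsWithin]
      exact ⟨Set.Iio 1, isOpen_Iio, hs.2, fun u hu => ⟨le_trans hs.1 hu.2, le_of_lt hu.1⟩⟩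
    have hres := norm_le_gronwallBound_of_norm_deriv_right_le (δ := 0)
      hcont hf' (by simp [hf0]) hbound
    intro t ht
    have h5 := hres t ht
    rw [gronwallBound_ε0_δ0] at h5
    have hft : f t = 0 := le_antisymm (le_trans (le_abs_self _) h5) (by positivity)
    have hrt : r t = 0 := by
      have : ‖r t‖ = 0 := by
        have : ‖r t‖^2 = 0 := hft
        nlinarith [norm_nonneg (r t)]
      exact norm_eq_zero.mp this
    have hfin : y t = P0 t (x t) := by rwa [hr, sub_eq_zero] at hrt
    simpa [hy, hx, hψ] using hfin
  -- conclude by density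
  intro t ht
  refine ContinuousLinearMap.ext_on (s := (D' : Set H))
    (by rwa [Submodule.span_eq]) ?_
  intro z hz
  simpa using key ⟨z, hz⟩ t ht
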